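/- Let T = (t_ij) be an n×n principal multiplier matrix in canonical form (block-diagonal with blocks of 1's on the diagonal corresponding to a partition of {1,…,n} into intervals, and 0's elsewhere). Define s_ijk = 1 if t_ij = 1 or t_jk = 1, and s_ijk = 0 otherwise. Then {s_ijk} is a multiplier system (satisfies s_iik = 1 = s_ikk and s_ijk·s_ikℓ = s_ijℓ·s_jkℓ), and the principal multiplier matrix of the resulting formal matrix ring, namely (s_iji), equals T. -/
import Mathlib


/-- If `T` is a principal multiplier matrix in canonical form
(blocks given by a monotone labelling `b`) and `s i j k = 1` when `T i j = 1` or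
`T j k = 1` (and `0` otherwise), then `s` is a multiplier system whose principal
multiplier matrix `(s i j i)` equals `T`. -/
theorem canonical_form_gives_multiplier_system {R : Type*} [Ring R] [DecidableEq R]
    (n : ℕ) (T : Matrix (Fin n) (Fin n) R) (b : Fin n → ℕ) (hb : Monotone b)
    (hT : ∀ i j, T i j = if b i = b j then (1 : R) else 0)
    (s : Fin n → Fin n → Fin n → R)
    (hs : ∀ i j k, s i j k = if T i j = 1 ∨ T j k = 1 then (1 : R) else 0) :
    (∀ i j k (r : R), s i j k * r = r * s i j k) ∧
    (∀ i k, s i i k = 1) ∧ (∀ i k, s i k k = 1) ∧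
    (∀ i j k l, s i j k * s i k l = s i j l * s j k l) ∧
    (∀ i j, s i j i = T i j) := by
  by_cases h10 : (1 : R) = 0
  · have hsub : Subsingleton R := subsingleton_of_zero_eq_one h10.symm
    exact ⟨fun _ _ _ _ => Subsingleton.elim _ _, fun _ _ => Subsingleton.elim _ _,
      fun _ _ => Subsingleton.elim _ _, fun _ _ _ _ => Subsingleton.elim _ _,
      fun _ _ => Subsingleton.elim _ _⟩
  · have hT1 : ∀ i j, T i j = 1 ↔ b i = b j := by
      intro i j
      rw [hT]
      split
      · simp_all
      · simp_all [Ne.symm h10]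
    have hs' : ∀ i j k, s i j k = if (b i = b j ∨ b j = b k) then (1 : R) else 0 := by
      intro i j k
      rw [hs]
      simp only [hT1]
    refine ⟨?_, ?_, ?_, ?_, ?_⟩
    · intro i j k r
      rw [hs']
      split <;> simp
    · intro i k; rw [hs']; simp
    · intro i k; rw [hs']; simp
    · intro i j k l
      simp only [hs']
      split_ifs
      all_goals try simp
      all_goals exfalso; omega
    · intro i j
      rw [hs', hT]
      split_ifs <;> first | rfl | omega
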